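/- Let G be an n-vertex graph with a Hamilton packing of size h (h pairwise edge-disjoint Hamilton cycles), and suppose that for some constant c, every matching of G can be covered by at most c Hamilton cycles of G. Then G has a Hamilton covering of size at most h + 2c·(Δ(G) − 2h). -/

import Mathlib

open Finset

namespace SimpleGraph
namespace Walk
variable {V : Type*} {G : SimpleGraph V}

lemma my_support_getElem : ∀ {u v : V} (p : G.Walk u v) (i : ℕ) (hi : i < p.support.length),
    p.support[i] = p.getVert i
  | _, _, .nil, 0, _ => rfl
  | _, _, .cons h q, 0, _ => rfl
  | _, _, .cons h q, (i+1), hi => by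
      simpa [Walk.getVert_cons_succ] using
        my_support_getElem q i (by simpa [Walk.support_cons] using hi)

lemma my_firstEdge_mem {u w : V} (p : G.Walk u w) (hp : ¬ p.Nil) :
    s(u, p.getVert 1) ∈ p.edges := by
  cases p with
  | nil => simp at hp
  | cons h q => simp [Walk.getVert_cons _ _ one_ne_zero]

lemma my_cycle_getVert_ne {v : V} {p : G.Walk v v} (hp : p.IsCycle) :
    p.getVert 1 ≠ p.getVert (p.length - 1) := by
  have h3 := hp.three_le_length
  have hnd : p.support.tail.Nodup := (Walk.isCycle_def p).mp hp |>.2.2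
  have hlen : p.support.length = p.length + 1 := p.length_support
  intro heq
  have h0 : p.support.tail[0]'(by simp [List.length_tail, hlen]; omega) = p.getVert 1 := by
    rw [List.getElem_tail]
    exact my_support_getElem p 1 (by omega)
  have h2 : p.support.tail[p.length - 2]'(by simp [List.length_tail, hlen]; omega)
      = p.getVert (p.length - 1) := by
    rw [List.getElem_tail, my_support_getElem p _ (by simp [hlen]; omega)]
    congr 1
    omega
  have hEq : p.support.tail[0]'(by simp [List.length_tail, hlen]; omega)
      = p.support.tail[p.length - 2]'(by simp [List.length_tail, hlen]; omega) := by
    rw [h0, h2]; exact heq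
  have := hnd.getElem_inj_iff.mp hEq
  omega

lemma my_cycle_two_edges [DecidableEq V] {w : V} {p : G.Walk w w} (hp : p.IsCycle)
    {v : V} (hv : v ∈ p.support) :
    ∃ e₁ e₂ : Sym2 V, e₁ ∈ p.edges ∧ e₂ ∈ p.edges ∧ e₁ ≠ e₂ ∧ v ∈ e₁ ∧ v ∈ e₂ := by
  set q := p.rotate v hv with hqdef
  have hq : q.IsCycle := hp.rotate hv
  have hmem : ∀ e, e ∈ q.edges → e ∈ p.edges := fun e he =>
    ((p.rotate_edges v hv).perm.mem_iff).mp he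
  have hnn : ¬ q.Nil := hq.not_nil
  have h1 : s(v, q.getVert 1) ∈ q.edges := my_firstEdge_mem q hnn
  have hnn' : ¬ q.reverse.Nil := by
    rwa [Walk.nil_iff_length_eq, Walk.length_reverse, ← Walk.nil_iff_length_eq]
  have h2' : s(v, q.reverse.getVert 1) ∈ q.reverse.edges := my_firstEdge_mem q.reverse hnn'
  rw [Walk.getVert_reverse, Walk.edges_reverse, List.mem_reverse] at h2'
  refine ⟨_, _, hmem _ h1, hmem _ h2', ?_, ?_, ?_⟩
  · intro heq
    exact my_cycle_getVert_ne hq (Sym2.congr_right.mp heq)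
  · simp
  · simp

end Walk
end SimpleGraph

lemma my_greedy_coloring {V : Type*} [DecidableEq V] (k : ℕ) (S : Finset (Sym2 V))
    (hdeg : ∀ v : V, (S.filter (fun e => v ∈ e)).card ≤ k) :
    ∃ col : Sym2 V → ℕ, (∀ e ∈ S, col e < 2 * k) ∧
      (∀ e ∈ S, ∀ e' ∈ S, e ≠ e' → col e = col e' → ∀ v : V, v ∈ e → v ∉ e') := by
  classical
  induction S using Finset.strongInduction with
  | _ S ih =>
    rcases S.eq_empty_or_nonempty with rfl | ⟨e, he⟩
    · exact ⟨fun _ => 0, by simp, by simp⟩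
    · obtain ⟨col, hlt, hmatch⟩ := ih (S.erase e) (Finset.erase_ssubset he)
        (fun v => le_trans (Finset.card_le_card
          (Finset.filter_subset_filter _ (Finset.erase_subset _ _))) (hdeg v))
      revert he
      induction e using Sym2.ind with
      | _ a b =>
      intro he
      have hk : 1 ≤ k := le_trans (Finset.card_pos.mpr ⟨s(a,b), by simp [he]⟩) (hdeg a)
      set C : Finset (Sym2 V) := (S.erase s(a,b)).filter (fun e' => a ∈ e' ∨ b ∈ e') with hC
      have hCsub : C ⊆ (S.filter (fun e' => a ∈ e')).erase s(a,b)
          ∪ (S.filter (fun e' => b ∈ e')).erase s(a,b) := by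
        intro x hx
        simp only [hC, Finset.mem_filter, Finset.mem_erase, Finset.mem_union] at hx ⊢
        tauto
      have hCcard : C.card < 2 * k := by
        have h1 : ((S.filter (fun e' => a ∈ e')).erase s(a,b)).card ≤ k - 1 := by
          rw [Finset.card_erase_of_mem (by simp [he])]
          exact Nat.sub_le_sub_right (hdeg a) 1
        have h2 : ((S.filter (fun e' => b ∈ e')).erase s(a,b)).card ≤ k - 1 := by
          rw [Finset.card_erase_of_mem (by simp [he])]
          exact Nat.sub_le_sub_right (hdeg b) 1
        have := le_trans (Finset.card_le_card hCsub) (Finset.card_union_le _ _)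
        omega
      have hF : (C.image col).card < 2 * k :=
        lt_of_le_of_lt (Finset.card_image_le) hCcard
      rw [← Finset.card_range (2 * k)] at hF
      have hne : ¬ Finset.range (2 * k) ⊆ C.image col := fun hsub =>
        absurd (Finset.card_le_card hsub) (by omega)
      obtain ⟨m, hmr, hmF⟩ := Finset.not_subset.mp hne
      rw [Finset.mem_range] at hmr
      refine ⟨Function.update col s(a,b) m, ?_, ?_⟩
      · intro x hx
        rcases eq_or_ne x s(a,b) with rfl | hne
        · simpa using hmr
        · rw [Function.update_of_ne hne]
          exact hlt x (Finset.mem_erase.mpr ⟨hne, hx⟩)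
      · intro x hx y hy hxy hcxy v hvx hvy
        rcases eq_or_ne x s(a,b) with rfl | hnx
        · rw [Function.update_self] at hcxy
          rw [Function.update_of_ne (Ne.symm hxy)] at hcxy
          have hyC : y ∈ C := by
            refine Finset.mem_filter.mpr ⟨Finset.mem_erase.mpr ⟨Ne.symm hxy, hy⟩, ?_⟩
            rcases Sym2.mem_iff.mp hvx with rfl | rfl
            · exact Or.inl hvy
            · exact Or.inr hvy
          exact hmF (Finset.mem_image.mpr ⟨y, hyC, hcxy.symm⟩)
        · rcases eq_or_ne y s(a,b) with rfl | hny
          · rw [Function.update_self, Function.update_of_ne hnx] at hcxy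
            have hxC : x ∈ C := by
              refine Finset.mem_filter.mpr ⟨Finset.mem_erase.mpr ⟨hnx, hx⟩, ?_⟩
              rcases Sym2.mem_iff.mp hvy with rfl | rfl
              · exact Or.inl hvx
              · exact Or.inr hvx
            exact hmF (Finset.mem_image.mpr ⟨x, hxC, hcxy⟩)
          · rw [Function.update_of_ne hnx, Function.update_of_ne hny] at hcxy
            exact hmatch x (Finset.mem_erase.mpr ⟨hnx, hx⟩) y
              (Finset.mem_erase.mpr ⟨hny, hy⟩) hxy hcxy v hvx hvy
/-- if `G` has a Hamilton packing of size `h` (pairwise edge-disjoint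
Hamilton cycles) and every matching of `G` can be covered by at most `c` Hamilton
cycles of `G`, then `G` has a Hamilton covering of size at most
`h + 2c·(Δ(G) − 2h)`. -/
theorem stmt18 {V : Type*} [Fintype V] [DecidableEq V] (G : SimpleGraph V)
    [DecidableRel G.Adj] (h c : ℕ)
    (hpack : ∃ f : Fin h → Σ v : V, G.Walk v v,
      (∀ i, (f i).2.IsHamiltonianCycle) ∧
      ∀ i j, i ≠ j → ∀ e, e ∈ (f i).2.edges → e ∉ (f j).2.edges)
    (hcover : ∀ F : Finset (Sym2 V), (∀ e ∈ F, e ∈ G.edgeSet) →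
      (∀ e ∈ F, ∀ e' ∈ F, e ≠ e' → ∀ v : V, v ∈ e → v ∉ e') →
      ∃ (N : ℕ) (f : Fin N → Σ v : V, G.Walk v v), N ≤ c ∧
        (∀ i, (f i).2.IsHamiltonianCycle) ∧ ∀ e ∈ F, ∃ i, e ∈ (f i).2.edges) :
    ∃ (N : ℕ) (f : Fin N → Σ v : V, G.Walk v v),
      N ≤ h + 2 * c * (G.maxDegree - 2 * h) ∧
      (∀ i, (f i).2.IsHamiltonianCycle) ∧
      ∀ e ∈ G.edgeSet, ∃ i, e ∈ (f i).2.edges := by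
  classical
  obtain ⟨fp, hham, hdisj⟩ := hpack
  set k := G.maxDegree - 2 * h with hk
  set R : Finset (Sym2 V) :=
    G.edgeFinset \ Finset.univ.biUnion (fun i : Fin h => (fp i).2.edges.toFinset) with hR
  -- per-vertex degree bound on the remaining edges
  have hdegR : ∀ v : V, (R.filter (fun e => v ∈ e)).card ≤ k := by
    intro v
    set A := R.filter (fun e => v ∈ e) with hA
    set B := Finset.univ.biUnion
      (fun i : Fin h => (fp i).2.edges.toFinset.filter (fun e => v ∈ e)) with hB
    have hBdisj : ∀ i ∈ (Finset.univ : Finset (Fin h)), ∀ j ∈ Finset.univ, i ≠ j →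
        Disjoint ((fp i).2.edges.toFinset.filter (fun e => v ∈ e))
          ((fp j).2.edges.toFinset.filter (fun e => v ∈ e)) := by
      intro i _ j _ hij
      rw [Finset.disjoint_left]
      intro e hei hej
      simp only [Finset.mem_filter, List.mem_toFinset] at hei hej
      exact hdisj i j hij e hei.1 hej.1
    have hBcard : 2 * h ≤ B.card := by
      rw [hB, Finset.card_biUnion hBdisj]
      calc 2 * h = ∑ _i : Fin h, 2 := by simp [mul_comm]
        _ ≤ _ := Finset.sum_le_sum fun i _ => by
            obtain ⟨e₁, e₂, m1, m2, hne, v1, v2⟩ :=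
              SimpleGraph.Walk.my_cycle_two_edges (hham i).isCycle
                ((hham i).mem_support v)
            have hsub : ({e₁, e₂} : Finset (Sym2 V)) ⊆
                (fp i).2.edges.toFinset.filter (fun e => v ∈ e) := by
              intro x hx
              simp only [Finset.mem_insert, Finset.mem_singleton] at hx
              rcases hx with rfl | rfl <;>
                simp only [Finset.mem_filter, List.mem_toFinset] <;> exact ⟨by assumption, by assumption⟩
            calc 2 = ({e₁, e₂} : Finset (Sym2 V)).card := (Finset.card_pair hne).symm
              _ ≤ _ := Finset.card_le_card hsub
    have hAB : Disjoint A B := by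
      rw [Finset.disjoint_left]
      intro e heA heB
      rw [hA, Finset.mem_filter, hR, Finset.mem_sdiff] at heA
      rw [hB, Finset.mem_biUnion] at heB
      obtain ⟨i, _, hei⟩ := heB
      exact heA.1.2 (Finset.mem_biUnion.mpr ⟨i, Finset.mem_univ i,
        (Finset.mem_filter.mp hei).1⟩)
    have hsub : A ∪ B ⊆ G.incidenceFinset v := by
      intro e he
      rw [G.incidenceFinset_eq_filter, Finset.mem_filter]
      rcases Finset.mem_union.mp he with he | he
      · rw [hA, Finset.mem_filter, hR, Finset.mem_sdiff] at he
        exact ⟨he.1.1, he.2⟩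
      · rw [hB, Finset.mem_biUnion] at he
        obtain ⟨i, _, hei⟩ := he
        rw [Finset.mem_filter, List.mem_toFinset] at hei
        exact ⟨SimpleGraph.mem_edgeFinset.mpr ((fp i).2.edges_subset_edgeSet hei.1), hei.2⟩
    have hcard := Finset.card_le_card hsub
    rw [Finset.card_union_of_disjoint hAB, SimpleGraph.card_incidenceFinset_eq_degree] at hcard
    have hd := G.degree_le_maxDegree v
    omega
  -- greedy edge-coloring of the remaining edges with 2k colors
  obtain ⟨col, hcol_lt, hcol_match⟩ := my_greedy_coloring k R hdegR
  -- cover each color class (a matching) with at most c Hamilton cycles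
  have hmono : ∀ j : ℕ, ∀ e ∈ R.filter (fun e => col e = j), e ∈ G.edgeSet := by
    intro j e he
    rw [Finset.mem_filter, hR, Finset.mem_sdiff] at he
    exact SimpleGraph.mem_edgeFinset.mp he.1.1
  choose Nc fc hNc hhamc hcovc using fun j : ℕ =>
    hcover (R.filter (fun e => col e = j)) (hmono j)
      (fun e he e' he' hne v hv => by
        rw [Finset.mem_filter] at he he'
        exact hcol_match e he.1 e' he'.1 hne (he.2.trans he'.2.symm) v hv)
  -- assemble all cycles in a list
  set L : List (Σ v : V, G.Walk v v) :=
    (List.ofFn fp) ++ ((List.range (2 * k)).map (fun j => List.ofFn (fc j))).flatten with hL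
  have hLlen : L.length ≤ h + 2 * c * k := by
    rw [hL, List.length_append, List.length_ofFn, List.length_flatten]
    have : (((List.range (2 * k)).map (fun j => List.ofFn (fc j))).map List.length).sum
        ≤ 2 * k * c := by
      have hle : ∀ x ∈ ((List.range (2 * k)).map (fun j => List.ofFn (fc j))).map List.length,
          x ≤ c := by
        intro x hx
        simp only [List.mem_map, List.mem_range] at hx
        obtain ⟨l, ⟨j, _, rfl⟩, rfl⟩ := hx
        simpa using hNc j
      calc _ ≤ (((List.range (2 * k)).map (fun j => List.ofFn (fc j))).map List.length).length * c :=
            List.sum_le_card_nsmul _ c hle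
        _ = 2 * k * c := by simp
    have hmul : 2 * k * c = 2 * c * k := by ring
    omega
  have hLham : ∀ x ∈ L, x.2.IsHamiltonianCycle := by
    intro x hx
    rw [hL, List.mem_append] at hx
    rcases hx with hx | hx
    · obtain ⟨i, rfl⟩ := List.mem_ofFn.mp hx
      exact hham i
    · rw [List.mem_flatten] at hx
      obtain ⟨l, hl, hxl⟩ := hx
      simp only [List.mem_map, List.mem_range] at hl
      obtain ⟨j, _, rfl⟩ := hl
      obtain ⟨i, rfl⟩ := List.mem_ofFn.mp hxl
      exact hhamc j i
  have hLcov : ∀ e ∈ G.edgeSet, ∃ x ∈ L, e ∈ x.2.edges := by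
    intro e he
    by_cases hp : ∃ i, e ∈ (fp i).2.edges
    · obtain ⟨i, hi⟩ := hp
      exact ⟨fp i, by rw [hL, List.mem_append]; exact Or.inl (List.mem_ofFn.mpr ⟨i, rfl⟩), hi⟩
    · push_neg at hp
      have heR : e ∈ R := by
        rw [hR, Finset.mem_sdiff]
        refine ⟨SimpleGraph.mem_edgeFinset.mpr he, ?_⟩
        rw [Finset.mem_biUnion]
        rintro ⟨i, _, hei⟩
        exact hp i (List.mem_toFinset.mp hei)
      have hjlt : col e < 2 * k := hcol_lt e heR
      obtain ⟨i, hi⟩ := hcovc (col e) e (Finset.mem_filter.mpr ⟨heR, rfl⟩)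
      refine ⟨fc (col e) i, ?_, hi⟩
      rw [hL, List.mem_append, List.mem_flatten]
      exact Or.inr ⟨List.ofFn (fc (col e)),
        List.mem_map.mpr ⟨col e, List.mem_range.mpr hjlt, rfl⟩,
        List.mem_ofFn.mpr ⟨i, rfl⟩⟩
  refine ⟨L.length, fun i => L.get i, by omega, fun i => hLham _ (L.get_mem i), ?_⟩
  intro e he
  obtain ⟨x, hxL, hex⟩ := hLcov e he
  obtain ⟨i, rfl⟩ := List.mem_iff_get.mp hxL
  exact ⟨i, hex⟩
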